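/- Let W(l, d) count nonnegative integer solutions of l = Σ_i d_i x_i where d_i are nonzero integers (possibly negative) with d_i < 0 exactly for i in a set S of size k+1, interpreted via the generating function ∏ 1/(1-t^{d_i}) expanded at t=0. Then W(l, d) = (-1)^{k+1} W(l + Σ_{i∈S} d_i, |d|), where |d| is the vector of absolute values. -/

import Mathlib

open PowerSeries HahnSeries Finset

/-- Generating function `∑_{a ∣ n} t^n = (1 - t^a)⁻¹`. -/
noncomputable def Fgen (a : ℕ) : PowerSeries ℚ :=
  PowerSeries.mk fun n => if a ∣ n then 1 else 0

lemma coeff_Fgen (a n : ℕ) : PowerSeries.coeff n (Fgen a) = if a ∣ n then 1 else 0 :=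
  PowerSeries.coeff_mk _ _

lemma Fgen_mul (a : ℕ) (ha : 0 < a) : (1 - PowerSeries.X ^ a) * Fgen a = 1 := by
  ext n
  rw [sub_mul, one_mul, map_sub, PowerSeries.coeff_X_pow_mul', coeff_Fgen,
    PowerSeries.coeff_one]
  rcases eq_or_ne n 0 with rfl | hn
  · simp [Nat.not_le.2 ha]
  · rw [if_neg hn]
    by_cases h1 : a ∣ n
    · have h2 : a ≤ n := Nat.le_of_dvd (Nat.pos_of_ne_zero hn) h1
      rw [if_pos h1, if_pos h2, coeff_Fgen, if_pos (Nat.dvd_sub h1 dvd_rfl)]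
      ring
    · rw [if_neg h1]
      by_cases h2 : a ≤ n
      · rw [if_pos h2, coeff_Fgen, if_neg ?_, sub_zero]
        intro hdvd
        exact h1 (by simpa [Nat.sub_add_cancel h2] using Nat.dvd_add hdvd dvd_rfl)
      · rw [if_neg h2, sub_zero]

lemma coe_one_sub_X_pow (a : ℕ) :
    ((1 - PowerSeries.X ^ a : PowerSeries ℚ) : LaurentSeries ℚ) =
      1 - HahnSeries.single (a : ℤ) 1 := by
  rw [PowerSeries.coe_sub, PowerSeries.coe_one]
  rw [HahnSeries.ofPowerSeries_X_pow]

lemma base_mul (a : ℕ) (ha : 0 < a) :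
    (1 - (HahnSeries.single (a : ℤ) 1 : LaurentSeries ℚ)) * ((Fgen a : PowerSeries ℚ) : LaurentSeries ℚ) = 1 := by
  rw [← coe_one_sub_X_pow, ← PowerSeries.coe_mul, Fgen_mul a ha, PowerSeries.coe_one]

lemma prod_single {ι : Type*} (s : Finset ι) (b : ι → ℤ) :
    ∏ i ∈ s, (HahnSeries.single (b i) 1 : LaurentSeries ℚ) =
      HahnSeries.single (∑ i ∈ s, b i) 1 := by
  induction s using Finset.cons_induction with
  | empty => simp [HahnSeries.single_zero_one]
  | cons i s hi ih =>
      rw [Finset.prod_cons, ih, HahnSeries.single_mul_single, Finset.sum_cons, mul_one]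

lemma coeff_neg_one_pow_mul (n : ℕ) (x : LaurentSeries ℚ) (l : ℤ) :
    (((-1) ^ n : LaurentSeries ℚ) * x).coeff l = (-1) ^ n * x.coeff l := by
  induction n generalizing x with
  | zero => simp
  | succ n ih =>
      have h : ((-1 : LaurentSeries ℚ)) ^ (n + 1) * x = ((-1) ^ n) * (-x) := by ring
      rw [h, ih (-x), HahnSeries.coeff_neg]
      ring

lemma card_eq (m : ℕ) (a : Fin m → ℕ) (ha : ∀ i, 0 < a i) (n : ℕ) :
    Nat.card {x : Fin m → ℕ // (n : ℤ) = ∑ i, (x i : ℤ) * (a i : ℤ)} =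
      ((Finset.finsuppAntidiag (Finset.univ : Finset (Fin m)) n).filter
        (fun w => ∀ i, a i ∣ w i)).card := by
  classical
  set A := ((Finset.finsuppAntidiag (Finset.univ : Finset (Fin m)) n).filter
        (fun w => ∀ i, a i ∣ w i)) with hA
  have e : {x : Fin m → ℕ // (n : ℤ) = ∑ i, (x i : ℤ) * (a i : ℤ)} ≃ ↥A := by
    refine ⟨fun x => ⟨Finsupp.equivFunOnFinite.symm (fun i => x.1 i * a i), ?_⟩,
      fun w => ⟨fun i => w.1 i / a i, ?_⟩, ?_, ?_⟩
    · have hx : ∑ i, x.1 i * a i = n := by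
        have := x.2
        have : ((∑ i, x.1 i * a i : ℕ) : ℤ) = (n : ℤ) := by push_cast; rw [← this]
        exact_mod_cast this
      simp only [hA, Finset.mem_filter, Finset.mem_finsuppAntidiag]
      refine ⟨⟨?_, Finset.subset_univ _⟩, ?_⟩
      · simpa [Finsupp.equivFunOnFinite] using hx
      · intro i; simpa [Finsupp.equivFunOnFinite] using Dvd.intro (x.1 i) rfl
    · have hw := w.2
      simp only [hA, Finset.mem_filter, Finset.mem_finsuppAntidiag] at hw
      obtain ⟨⟨hsum, -⟩, hdvd⟩ := hw
      have : ∑ i, (w.1 i / a i) * a i = n := by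
        rw [← hsum]
        exact Finset.sum_congr rfl fun i _ => Nat.div_mul_cancel (hdvd i)
      have := congrArg (fun t : ℕ => (t : ℤ)) this
      push_cast at this
      exact this.symm
    · intro x
      ext i
      simp [Finsupp.equivFunOnFinite, Nat.mul_div_cancel _ (ha i)]
    · intro w
      have hw := w.2
      simp only [hA, Finset.mem_filter, Finset.mem_finsuppAntidiag] at hw
      ext i
      simp [Finsupp.equivFunOnFinite, Nat.div_mul_cancel (hw.2 i)]
  rw [Nat.card_congr e, Nat.card_eq_finsetCard]

set_option maxHeartbeats 1000000 in
theorem stmt10 (m k : ℕ) (d : Fin m → ℤ) (hd : ∀ i, d i ≠ 0)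
    (hS : (Finset.univ.filter (fun i => d i < 0)).card = k + 1) (l : ℤ) :
    (∏ i, (1 - (HahnSeries.single (d i) 1 : LaurentSeries ℚ))⁻¹).coeff l =
      (-1) ^ (k + 1) *
        Nat.card {x : Fin m → ℕ //
          l + ∑ i ∈ Finset.univ.filter (fun i => d i < 0), d i
            = ∑ i, (x i : ℤ) * |d i|} := by
  classical
  set S := Finset.univ.filter (fun i => d i < 0) with hSdef
  set a : Fin m → ℕ := fun i => (d i).natAbs with haDef
  have hapos : ∀ i, 0 < a i := fun i => Int.natAbs_pos.2 (hd i)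
  -- per-factor identity
  have key : ∀ i, (1 - (HahnSeries.single (d i) 1 : LaurentSeries ℚ))⁻¹ =
      (if d i < 0 then -(HahnSeries.single (-(d i)) 1) else 1) *
        ((Fgen (a i) : PowerSeries ℚ) : LaurentSeries ℚ) := by
    intro i
    by_cases hdi : d i < 0
    · rw [if_pos hdi]
      have habs : ((a i : ℤ)) = -(d i) := by
        exact Int.ofNat_natAbs_of_nonpos hdi.le
      refine inv_eq_of_mul_eq_one_right ?_
      have e1 : (HahnSeries.single (d i) 1 : LaurentSeries ℚ) * HahnSeries.single (-(d i)) 1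
          = 1 := by
        rw [HahnSeries.single_mul_single, add_neg_cancel, mul_one, HahnSeries.single_zero_one]
      have h1 : (1 - (HahnSeries.single (d i) 1 : LaurentSeries ℚ)) *
          (-(HahnSeries.single (-(d i)) 1)) = 1 - HahnSeries.single (-(d i)) 1 := by
        linear_combination e1
      rw [← mul_assoc, h1, ← habs, base_mul (a i) (hapos i)]
    · rw [if_neg hdi, one_mul]
      have habs : ((a i : ℤ)) = d i := by
        exact Int.natAbs_of_nonneg (not_lt.1 hdi)
      refine inv_eq_of_mul_eq_one_right ?_
      rw [← habs, base_mul (a i) (hapos i)]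
  rw [Finset.prod_congr rfl (fun i _ => key i), Finset.prod_mul_distrib]
  -- collapse the sign part
  have hsign : (∏ i, (if d i < 0 then -(HahnSeries.single (-(d i)) 1 : LaurentSeries ℚ) else 1)) =
      ((-1) ^ (k + 1) : LaurentSeries ℚ) * HahnSeries.single (-(∑ i ∈ S, d i)) 1 := by
    rw [← Finset.prod_filter, ← hSdef]
    have : ∀ i ∈ S, -(HahnSeries.single (-(d i)) 1 : LaurentSeries ℚ) =
        (-1) * HahnSeries.single (-(d i)) 1 := fun i _ => by ring
    rw [Finset.prod_congr rfl this, Finset.prod_mul_distrib, Finset.prod_const, hS,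
      prod_single, ← Finset.sum_neg_distrib]
  rw [hsign]
  -- collapse the power series part
  have hcoe : (∏ i, ((Fgen (a i) : PowerSeries ℚ) : LaurentSeries ℚ)) =
      ((∏ i, Fgen (a i) : PowerSeries ℚ) : LaurentSeries ℚ) :=
    (map_prod (HahnSeries.ofPowerSeries ℤ ℚ) _ _).symm
  rw [hcoe, mul_assoc, coeff_neg_one_pow_mul]
  -- now handle the single * coe product coefficient
  set c : ℤ := -(∑ i ∈ S, d i) with hc
  set P : PowerSeries ℚ := ∏ i, Fgen (a i) with hP
  have hstep : ((HahnSeries.single c 1 : LaurentSeries ℚ) *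
      (HahnSeries.ofPowerSeries ℤ ℚ) P).coeff l =
      ((HahnSeries.ofPowerSeries ℤ ℚ) P).coeff (l - c) := by
    conv_lhs => rw [show l = l - c + c from by ring]
    rw [HahnSeries.coeff_single_mul_add, one_mul]
  rw [hstep]
  have hl' : l - c = l + ∑ i ∈ S, d i := by rw [hc]; ring
  rw [hl', PowerSeries.coeff_coe]
  set l' : ℤ := l + ∑ i ∈ S, d i with hl'def
  have habs : ∀ i, |d i| = ((a i : ℤ)) := fun i => (Int.abs_eq_natAbs (d i)).trans rfl
  by_cases hneg : l' < 0
  · rw [if_pos hneg]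
    haveI : IsEmpty {x : Fin m → ℕ // l' = ∑ i, (x i : ℤ) * |d i|} := by
      refine ⟨fun x => ?_⟩
      have h0 : (0 : ℤ) ≤ ∑ i, (x.1 i : ℤ) * |d i| :=
        Finset.sum_nonneg fun i _ => mul_nonneg (Int.natCast_nonneg _) (abs_nonneg _)
      have h1 := x.2
      rw [← h1] at h0
      exact absurd hneg (not_lt.2 h0)
    rw [Nat.card_of_isEmpty]
    simp
  · rw [if_neg hneg]
    have hln : l' = ((l'.natAbs : ℕ) : ℤ) := (Int.natAbs_of_nonneg (not_lt.1 hneg)).symm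
    set n : ℕ := l'.natAbs with hn
    simp only [habs]
    rw [hln, card_eq m a hapos n]
    rw [hP, PowerSeries.coeff_prod]
    have hb : ∀ w ∈ Finset.finsuppAntidiag (Finset.univ : Finset (Fin m)) n,
        (∏ i, PowerSeries.coeff (w i) (Fgen (a i))) =
          if ∀ i, a i ∣ w i then (1 : ℚ) else 0 := by
      intro w _
      rw [Finset.prod_congr rfl (fun i _ => coeff_Fgen (a i) (w i))]
      convert Fintype.prod_boole (M₀ := ℚ) (p := fun i => a i ∣ w i) using 2
    rw [Finset.sum_congr (rfl : Finset.finsuppAntidiag (Finset.univ : Finset (Fin m)) n = _) hb]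
    congr 1
    exact Finset.sum_boole _ _
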